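/- arXiv:1808.02626 — 4 statements merged into one kernel-verified Lean document; each statement's English description precedes it below -/
import Mathlib

section
/- If positive reals Q_i^{(a)} satisfy the A_n Q-system and Y_i^{(a)} is defined by Y_i^{(a)} = Q_{i-1}^{(a)} Q_{i+1}^{(a)} / ∏_{b∼a} Q_i^{(b)}, then the Y-system holds: (1+Y_i^{(a)})^2 / ((1+Y_{i-1}^{(a)})(1+Y_{i+1}^{(a)})) = ∏_{b=1}^n (1 + (Y_i^{(b)})^{-1})^{C_{ab}}, where Y_0^{(a)} = 0. -/
/-- The Cartan matrix of type `A_n` (indices in `Fin n`). -/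
def cartanA (n : ℕ) (a b : Fin n) : ℤ :=
  if a = b then 2 else if (a : ℕ) + 1 = (b : ℕ) ∨ (b : ℕ) + 1 = (a : ℕ) then -1 else 0

/-- The product `∏_{b ∼ a} Q_i^{(b)}` over Dynkin-diagram neighbours of `a`. -/
noncomputable def nbrProd (n : ℕ) (Q : Fin n → ℕ → ℝ) (a : Fin n) (i : ℕ) : ℝ :=
  ∏ b ∈ Finset.univ.filter
      (fun b : Fin n => (a : ℕ) + 1 = (b : ℕ) ∨ (b : ℕ) + 1 = (a : ℕ)), Q b i

/-- If positive reals `Q_i^{(a)}` (with `Q_0^{(a)} = 1`) satisfy the `A_n` Q-system and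
`Y_i^{(a)} = Q_{i-1}^{(a)} Q_{i+1}^{(a)} / ∏_{b∼a} Q_i^{(b)}` for `i ≥ 1`, `Y_0^{(a)} = 0`,
then the Y-system holds:
`(1+Y_i^{(a)})^2 / ((1+Y_{i-1}^{(a)})(1+Y_{i+1}^{(a)})) = ∏_b (1+(Y_i^{(b)})⁻¹)^{C_{ab}}`. -/
theorem Y_system (n : ℕ) (Q : Fin n → ℕ → ℝ)
    (hpos : ∀ a i, 0 < Q a i) (h0 : ∀ a, Q a 0 = 1)
    (hQ : ∀ a i, 1 ≤ i → Q a i ^ 2 = Q a (i - 1) * Q a (i + 1) + nbrProd n Q a i)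
    (Y : Fin n → ℕ → ℝ) (hY0 : ∀ a, Y a 0 = 0)
    (hY : ∀ a i, 1 ≤ i → Y a i = Q a (i - 1) * Q a (i + 1) / nbrProd n Q a i)
    (a : Fin n) (i : ℕ) (hi : 1 ≤ i) :
    (1 + Y a i) ^ 2 / ((1 + Y a (i - 1)) * (1 + Y a (i + 1))) =
      ∏ b, (1 + (Y b i)⁻¹) ^ (cartanA n a b) := by
  classical
  set S : Finset (Fin n) := Finset.univ.filter
      (fun b : Fin n => (a : ℕ) + 1 = (b : ℕ) ∨ (b : ℕ) + 1 = (a : ℕ)) with hS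
  have hPpos : ∀ b j, 0 < nbrProd n Q b j := fun b j =>
    Finset.prod_pos fun c _ => hpos c j
  have hPne : ∀ b j, nbrProd n Q b j ≠ 0 := fun b j => (hPpos b j).ne'
  have hQne : ∀ b j, Q b j ≠ 0 := fun b j => (hpos b j).ne'
  have hP0 : ∀ b, nbrProd n Q b 0 = 1 := by
    intro b; unfold nbrProd; simp [h0]
  have h1Y : ∀ b j, 1 + Y b j = Q b j ^ 2 / nbrProd n Q b j := by
    intro b j
    match j with
    | 0 => simp [hY0, h0, hP0]
    | (k+1) =>
      rw [hY b (k+1) (Nat.le_add_left 1 k), hQ b (k+1) (Nat.le_add_left 1 k)]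
      have hp := hPne b (k+1)
      field_simp
      ring
  have h1Yi : ∀ b : Fin n, 1 + (Y b i)⁻¹ = Q b i ^ 2 / (Q b (i-1) * Q b (i+1)) := by
    intro b
    rw [hY b i hi, inv_div, hQ b i hi]
    have h1 := hQne b (i-1); have h2 := hQne b (i+1)
    field_simp
  have hanotS : ¬((a:ℕ)+1 = (a:ℕ) ∨ (a:ℕ)+1 = (a:ℕ)) := by omega
  have key : ∀ f : Fin n → ℝ, (∏ b, f b ^ cartanA n a b) =
      f a ^ (2:ℤ) * (∏ b ∈ S, f b)⁻¹ := by
    intro f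
    have hpt : ∀ b : Fin n, f b ^ cartanA n a b =
        (if a = b then f b ^ (2:ℤ) else 1) *
        (if (a:ℕ)+1 = (b:ℕ) ∨ (b:ℕ)+1 = (a:ℕ) then (f b)⁻¹ else 1) := by
      intro b
      unfold cartanA
      by_cases hb : a = b
      · subst hb
        simp [hanotS]
      · simp only [if_neg hb]
        by_cases hnb : (a:ℕ)+1 = (b:ℕ) ∨ (b:ℕ)+1 = (a:ℕ)
        · simp [hnb, zpow_neg_one]
        · simp [hnb]
    rw [Finset.prod_congr rfl (fun b _ => hpt b), Finset.prod_mul_distrib,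
        Finset.prod_ite_eq, ← Finset.prod_filter, ← hS, ← Finset.prod_inv_distrib]
    simp
  rw [h1Y a i, h1Y a (i-1), h1Y a (i+1), key (fun b => 1 + (Y b i)⁻¹)]
  have hprodS : (∏ b ∈ S, (1 + (Y b i)⁻¹)) =
      nbrProd n Q a i ^ 2 / (nbrProd n Q a (i-1) * nbrProd n Q a (i+1)) := by
    rw [Finset.prod_congr rfl (fun b _ => h1Yi b), Finset.prod_div_distrib,
        Finset.prod_mul_distrib, Finset.prod_pow]
    rfl
  rw [hprodS, h1Yi a]
  have h1 := hQne a (i-1); have h2 := hQne a (i+1); have h3 := hQne a i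
  have h4 := hPne a (i-1); have h5 := hPne a (i+1); have h6 := hPne a i
  rw [show ((2:ℤ)) = ((2:ℕ) : ℤ) from rfl, zpow_natCast]
  field_simp
end

section
/- Let p_1,...,p_{n+1} > 0 with p_1 + ⋯ + p_{n+1} = 1, let u = p_1⋯p_{n+1}, define z_a = u^{-a/(n+1)} p_1⋯p_a for 0 ≤ a ≤ n+1 (so z_0 = z_{n+1} = 1), and ν_a = p_{a+1} + ⋯ + p_{n+1}. Then for each a ∈ [1,n]: z_a · ∂/∂z_a [log(∑_{j=1}^{n+1} z_j/z_{j-1})] = δ_{a,1} − ∑_{b=1}^n C_{ab} ν_b, where C is the A_n Cartan matrix and the derivative treats z_1,...,z_n as independent variables (z_0 = z_{n+1} = 1 fixed). -/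
/-- The Cartan matrix of type `A_n` on natural-number indices `1,…,n`. -/
def cartanN (a b : ℕ) : ℤ :=
  if a = b then 2 else if a + 1 = b ∨ b + 1 = a then -1 else 0

theorem eos_aux (n : ℕ) (hn : 1 ≤ n) (p : ℕ → ℝ)
    (hp : ∀ a ∈ Finset.Icc 1 (n + 1), 0 < p a)
    (hsum : ∑ a ∈ Finset.Icc 1 (n + 1), p a = 1)
    (a : ℕ) (ha1 : 1 ≤ a) (ha2 : a ≤ n)
    (u : ℝ) (hu_def : u = ∏ j ∈ Finset.Icc 1 (n + 1), p j)
    (zv : ℕ → ℝ) (hzv : zv = fun b : ℕ => u ^ (-(b : ℝ) / (n + 1)) * ∏ j ∈ Finset.Icc 1 b, p j)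
    (ν : ℕ → ℝ) (hν : ν = fun b : ℕ => ∑ j ∈ Finset.Icc (b + 1) (n + 1), p j) :
    zv a * deriv (fun t : ℝ =>
        Real.log (∑ j ∈ Finset.Icc 1 (n + 1),
          (if j = a then t else zv j) / (if j - 1 = a then t else zv (j - 1)))) (zv a)
      = (if a = 1 then 1 else 0) - ∑ b ∈ Finset.Icc 1 n, (cartanN a b : ℝ) * ν b := by
  have hppos : ∀ j, 1 ≤ j → j ≤ n + 1 → 0 < p j := fun j h1 h2 =>
    hp j (Finset.mem_Icc.mpr ⟨h1, h2⟩)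
  have hu : 0 < u := hu_def ▸ Finset.prod_pos hp
  set r : ℝ := u ^ (-(1 : ℝ) / (n + 1)) with hr_def
  have hr : 0 < r := Real.rpow_pos_of_pos hu _
  have hzpos : ∀ b, b ≤ n + 1 → 0 < zv b := by
    intro b hb
    rw [hzv]
    exact mul_pos (Real.rpow_pos_of_pos hu _)
      (Finset.prod_pos fun j hj => hppos j (Finset.mem_Icc.mp hj).1
        (le_trans (Finset.mem_Icc.mp hj).2 hb))
  have hratio : ∀ j, 1 ≤ j → j ≤ n + 1 → zv j = zv (j - 1) * (r * p j) := by
    intro j h1 h2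
    obtain ⟨k, rfl⟩ : ∃ k, j = k + 1 := ⟨j - 1, by omega⟩
    simp only [hzv, Nat.add_sub_cancel]
    rw [Finset.prod_Icc_succ_top (by omega)]
    have he : (-((k + 1 : ℕ) : ℝ) / (n + 1)) = (-(k : ℝ) / (n + 1)) + (-(1 : ℝ) / (n + 1)) := by
      push_cast; ring
    rw [he, Real.rpow_add hu]
    ring
  have hstep : ∀ j, 1 ≤ j → j ≤ n + 1 → zv j / zv (j - 1) = r * p j := by
    intro j h1 h2
    have hne := (hzpos (j - 1) (by omega)).ne'
    rw [hratio j h1 h2, mul_comm, mul_div_assoc, div_self hne, mul_one]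
  have hmem_a : a ∈ Finset.Icc 1 (n + 1) := Finset.mem_Icc.mpr ⟨ha1, by omega⟩
  have hmem_a1 : a + 1 ∈ (Finset.Icc 1 (n + 1)).erase a :=
    Finset.mem_erase.mpr ⟨by omega, Finset.mem_Icc.mpr ⟨by omega, by omega⟩⟩
  set K : ℝ := ∑ j ∈ ((Finset.Icc 1 (n + 1)).erase a).erase (a + 1), zv j / zv (j - 1) with hK_def
  have hsplit : ∀ t : ℝ, (∑ j ∈ Finset.Icc 1 (n + 1),
      (if j = a then t else zv j) / (if j - 1 = a then t else zv (j - 1)))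
      = t * (zv (a - 1))⁻¹ + zv (a + 1) * t⁻¹ + K := by
    intro t
    rw [← Finset.add_sum_erase _ _ hmem_a, ← Finset.add_sum_erase _ _ hmem_a1]
    have e1 : (if a = a then t else zv a) / (if a - 1 = a then t else zv (a - 1))
        = t * (zv (a - 1))⁻¹ := by
      rw [if_pos rfl, if_neg (by omega), div_eq_mul_inv]
    have e2 : (if a + 1 = a then t else zv (a + 1)) / (if a + 1 - 1 = a then t else zv (a + 1 - 1))
        = zv (a + 1) * t⁻¹ := by
      rw [if_neg (by omega), if_pos (by omega), div_eq_mul_inv]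
    have e3 : ∑ j ∈ ((Finset.Icc 1 (n + 1)).erase a).erase (a + 1),
        (if j = a then t else zv j) / (if j - 1 = a then t else zv (j - 1)) = K := by
      apply Finset.sum_congr rfl
      intro j hj
      have h1 := Finset.mem_erase.mp hj
      have h2 := Finset.mem_erase.mp h1.2
      have h3 := Finset.mem_Icc.mp h2.2
      rw [if_neg h2.1, if_neg (by omega)]
    rw [e1, e2, e3]
    ring
  have hQ : zv a * (zv (a - 1))⁻¹ + zv (a + 1) * (zv a)⁻¹ + K = r := by
    rw [← hsplit (zv a)]
    have hc : ∀ j ∈ Finset.Icc 1 (n + 1),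
        (if j = a then zv a else zv j) / (if j - 1 = a then zv a else zv (j - 1)) = r * p j := by
      intro j hj
      have h := Finset.mem_Icc.mp hj
      have key := hstep j h.1 h.2
      split_ifs with h1 h2 h3
      · omega
      · subst h1; exact key
      · rw [← h3]; exact key
      · exact key
    rw [Finset.sum_congr rfl hc, ← Finset.mul_sum, hsum, mul_one]
  -- the derivative
  have hza := hzpos a (by omega)
  have h1 : HasDerivAt (fun t : ℝ => t * (zv (a - 1))⁻¹) (zv (a - 1))⁻¹ (zv a) := by
    simpa using (hasDerivAt_id (zv a)).mul_const (zv (a - 1))⁻¹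
  have h2 : HasDerivAt (fun t : ℝ => zv (a + 1) * t⁻¹) (zv (a + 1) * -((zv a) ^ 2)⁻¹) (zv a) :=
    (hasDerivAt_inv hza.ne').const_mul (zv (a + 1))
  have hinner : HasDerivAt (fun t : ℝ => t * (zv (a - 1))⁻¹ + zv (a + 1) * t⁻¹ + K)
      ((zv (a - 1))⁻¹ + zv (a + 1) * -((zv a) ^ 2)⁻¹) (zv a) := (h1.add h2).add_const K
  have hne : zv a * (zv (a - 1))⁻¹ + zv (a + 1) * (zv a)⁻¹ + K ≠ 0 := by
    rw [hQ]; exact hr.ne'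
  have hlog := hinner.log hne
  rw [hQ] at hlog
  have hfun : (fun t : ℝ => Real.log (∑ j ∈ Finset.Icc 1 (n + 1),
      (if j = a then t else zv j) / (if j - 1 = a then t else zv (j - 1))))
      = fun t : ℝ => Real.log (t * (zv (a - 1))⁻¹ + zv (a + 1) * t⁻¹ + K) :=
    funext fun t => by rw [hsplit t]
  rw [hfun, hlog.deriv]
  -- LHS value
  have hLHS : zv a * (((zv (a - 1))⁻¹ + zv (a + 1) * -((zv a) ^ 2)⁻¹) / r) = p a - p (a + 1) := by
    have e2 : zv (a + 1) = zv a * (r * p (a + 1)) := by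
      have := hratio (a + 1) (by omega) (by omega)
      simpa using this
    have e1 : zv a = zv (a - 1) * (r * p a) := hratio a ha1 (by omega)
    rw [e2, e1]
    have hw := (hzpos (a - 1) (by omega)).ne'
    have hpa := (hppos a ha1 (by omega)).ne'
    field_simp
    ring
  rw [hLHS]
  -- ν facts
  have hν0 : ν 0 = 1 := by rw [hν]; simpa using hsum
  have hνtop : ν (n + 1) = 0 := by
    rw [hν]; simp only
    rw [Finset.Icc_eq_empty (by omega)]
    simp
  have hνstep : ∀ b, b ≤ n → ν b = p (b + 1) + ν (b + 1) := by
    intro b hb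
    have hins : Finset.Icc (b + 1) (n + 1) = insert (b + 1) (Finset.Icc (b + 2) (n + 1)) := by
      ext x; simp only [Finset.mem_Icc, Finset.mem_insert]; omega
    rw [hν]; simp only
    rw [hins, Finset.sum_insert (by simp)]
  -- Cartan sum
  have hC : ∑ b ∈ Finset.Icc 1 n, (cartanN a b : ℝ) * ν b
      = 2 * ν a - ν (a + 1) - (if a = 1 then 0 else ν (a - 1)) := by
    have hpt : ∀ b, ((cartanN a b : ℝ) * ν b)
        = (if b = a then 2 * ν b else 0) + (if b = a + 1 then -ν b else 0)
          + (if b = a - 1 then -ν b else 0) := by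
      intro b
      unfold cartanN
      split_ifs <;> push_cast <;> first | ring1 | (exfalso; omega)
    rw [Finset.sum_congr rfl (fun b _ => hpt b), Finset.sum_add_distrib,
      Finset.sum_add_distrib, Finset.sum_ite_eq', Finset.sum_ite_eq', Finset.sum_ite_eq']
    rw [if_pos (Finset.mem_Icc.mpr ⟨ha1, ha2⟩)]
    have t2 : (if a + 1 ∈ Finset.Icc 1 n then -ν (a + 1) else 0) = -ν (a + 1) := by
      split_ifs with h
      · rfl
      · have : a = n := by simp only [Finset.mem_Icc] at h; omega
        rw [this, hνtop]; ring
    have t3 : (if a - 1 ∈ Finset.Icc 1 n then -ν (a - 1) else 0)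
        = -(if a = 1 then 0 else ν (a - 1)) := by
      by_cases h : a = 1
      · rw [if_pos h, if_neg (by simp [Finset.mem_Icc]; omega)]; ring
      · rw [if_neg h, if_pos (Finset.mem_Icc.mpr ⟨by omega, by omega⟩)]
    rw [t2, t3]
    ring
  rw [hC]
  -- final arithmetic
  have s1 : ν a = p (a + 1) + ν (a + 1) := hνstep a ha2
  by_cases h : a = 1
  · subst h
    norm_num
    have s0' : ν 0 = p 1 + ν 1 := hνstep 0 (by omega)
    rw [hν0] at s0'
    linarith
  · simp only [if_neg h]
    have s2 : ν (a - 1) = p a + ν a := by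
      have := hνstep (a - 1) (by omega)
      rw [show a - 1 + 1 = a by omega] at this
      exact this
    linarith

/-- Equation of state: with `p_1,…,p_{n+1} > 0` summing to `1`, `u = p_1⋯p_{n+1}`,
`z_a = u^{-a/(n+1)} p_1⋯p_a` (so `z_0 = z_{n+1} = 1`) and
`ν_a = p_{a+1} + ⋯ + p_{n+1}`, for each `a ∈ [1,n]` the partial derivative identity
`z_a ∂/∂z_a log(∑_{j=1}^{n+1} z_j/z_{j-1}) = δ_{a,1} - ∑_b C_{ab} ν_b` holds. -/
theorem equation_of_state (n : ℕ) (hn : 1 ≤ n) (p : ℕ → ℝ)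
    (hp : ∀ a ∈ Finset.Icc 1 (n + 1), 0 < p a)
    (hsum : ∑ a ∈ Finset.Icc 1 (n + 1), p a = 1) :
    ∀ a, 1 ≤ a → a ≤ n →
      (let u : ℝ := ∏ j ∈ Finset.Icc 1 (n + 1), p j
       let zv : ℕ → ℝ := fun b => u ^ (-(b : ℝ) / (n + 1)) * ∏ j ∈ Finset.Icc 1 b, p j
       let ν : ℕ → ℝ := fun b => ∑ j ∈ Finset.Icc (b + 1) (n + 1), p j
       zv a * deriv (fun t : ℝ =>
          Real.log (∑ j ∈ Finset.Icc 1 (n + 1),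
            (if j = a then t else zv j) / (if j - 1 = a then t else zv (j - 1)))) (zv a)
        = (if a = 1 then 1 else 0) - ∑ b ∈ Finset.Icc 1 n, (cartanN a b : ℝ) * ν b) := by
  intro a ha1 ha2
  exact eos_aux n hn p hp hsum a ha1 ha2 _ rfl _ rfl _ rfl
end

section
/- Under the A_2 carrier Markov chain with transition probabilities weighted by p_1, p_2, p_3 parametrized as p_1 = z_1^2 z_2 / N, p_2 = z_2^2 / N, p_3 = z_1 / N with N = z_1 + z_1^2 z_2 + z_2^2, the measure π on six states {11,12,13,22,23,33} given by π_11 = z_1^4 z_2^2/Q, π_12 = z_1^2 z_2^3/Q, π_13 = z_1^3 z_2/Q, π_22 = z_2^4/Q, π_23 = z_1 z_2^2/Q, π_33 = z_1^2/Q with Q = z_1^2 + z_1^3 z_2 + z_1 z_2^2 + z_1^4 z_2^2 + z_1^2 z_2^3 + z_2^4, is stationary: it satisfies the six balance equations π_11 = p_1(π_11+π_12+π_13), π_12 = p_1 π_22 + p_1 π_23 + p_2 π_11, π_13 = p_1 π_33 + p_3 π_11 + p_3 π_12, π_22 = p_2(π_12+π_22+π_23), π_23 = p_2 π_13 + p_2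 π_33 + p_3 π_22, π_33 = p_3(π_13+π_23+π_33), and sums to 1. -/
/-- Stationarity of the explicit measure on the six-element `A_2` carrier crystal
`B^{(1)}_2`, together with its normalization. -/
theorem carrier_stationary_A2 (z1 z2 : ℝ) (h1 : 0 < z1) (h2 : 0 < z2) :
    let N : ℝ := z1 + z1 ^ 2 * z2 + z2 ^ 2
    let p1 : ℝ := z1 ^ 2 * z2 / N
    let p2 : ℝ := z2 ^ 2 / N
    let p3 : ℝ := z1 / N
    let Q : ℝ := z1 ^ 2 + z1 ^ 3 * z2 + z1 * z2 ^ 2 + z1 ^ 4 * z2 ^ 2 +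
      z1 ^ 2 * z2 ^ 3 + z2 ^ 4
    let π11 : ℝ := z1 ^ 4 * z2 ^ 2 / Q
    let π12 : ℝ := z1 ^ 2 * z2 ^ 3 / Q
    let π13 : ℝ := z1 ^ 3 * z2 / Q
    let π22 : ℝ := z2 ^ 4 / Q
    let π23 : ℝ := z1 * z2 ^ 2 / Q
    let π33 : ℝ := z1 ^ 2 / Q
    π11 = p1 * (π11 + π12 + π13) ∧
    π12 = p1 * π22 + p1 * π23 + p2 * π11 ∧
    π13 = p1 * π33 + p3 * π11 + p3 * π12 ∧
    π22 = p2 * (π12 + π22 + π23) ∧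
    π23 = p2 * π13 + p2 * π33 + p3 * π22 ∧
    π33 = p3 * (π13 + π23 + π33) ∧
    π11 + π12 + π13 + π22 + π23 + π33 = 1 := by
  intro N p1 p2 p3 Q π11 π12 π13 π22 π23 π33
  have hN : N ≠ 0 := by positivity
  have hQ : Q ≠ 0 := by positivity
  refine ⟨?_, ?_, ?_, ?_, ?_, ?_, ?_⟩ <;>
    simp only [N, p1, p2, p3, Q, π11, π12, π13, π22, π23, π33] <;>
    field_simp <;> ring
end

section
/- In the completely random case w_1 = ⋯ = w_{n+1} = 1, the column density η_i^{(a)} = s_{((i−1)^{a−1})} s_{(i^{a+1})} / (s_{(i^a)} s_{((i−1)^a)} s_{(1)}) evaluated at all variables equal to 1 equals a(n+1−a)/((n+1)(i+a−1)(i+a)). -/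
/-- `s_{(i^a)}(1,…,1)` in `n+1` variables, via the hook-content / Weyl dimension
formula: `∏_{j=1}^a ∏_{k=1}^{n+1-a} (i+j+k-1)/(j+k-1)`. -/
noncomputable def dimRect (n a i : ℕ) : ℝ :=
  ∏ j ∈ Finset.Icc 1 a, ∏ k ∈ Finset.Icc 1 (n + 1 - a),
    ((i + j + k - 1 : ℕ) : ℝ) / ((j + k - 1 : ℕ) : ℝ)

open Finset

noncomputable def sf (x : ℕ) : ℝ := ∏ t ∈ Finset.range x, (t.factorial : ℝ)

lemma sf_pos (x : ℕ) : 0 < sf x :=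
  Finset.prod_pos fun t _ => by positivity

lemma sf_succ (x : ℕ) : sf (x + 1) = sf x * (x.factorial : ℝ) :=
  Finset.prod_range_succ _ _

lemma sf_zero : sf 0 = 1 := rfl

lemma sf_prod (x a : ℕ) :
    sf (x + a) = sf x * ∏ t ∈ Finset.range a, ((x + t).factorial : ℝ) := by
  induction a with
  | zero => simp
  | succ a ih =>
      rw [← add_assoc, sf_succ, ih, Finset.prod_range_succ, mul_assoc]

lemma fact_consec (c m : ℕ) :
    ((c + m).factorial : ℝ) = (c.factorial : ℝ) * ∏ k ∈ Finset.range m, ((c + k + 1 : ℕ) : ℝ) := by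
  induction m with
  | zero => simp
  | succ m ih =>
      rw [← add_assoc, Nat.factorial_succ, Finset.prod_range_succ]
      push_cast at ih ⊢
      rw [ih]
      ring

lemma dim_eq (n a i m : ℕ) (hm : n + 1 - a = m) :
    dimRect n a i =
      (sf (i + m + a) * sf a * sf m * sf i) / (sf (i + m) * sf (i + a) * sf (m + a)) := by
  subst hm
  set m := n + 1 - a with hm
  unfold dimRect
  rw [← hm]
  have step1 : ∀ j ∈ Finset.Icc 1 a,
      (∏ k ∈ Finset.Icc 1 m, ((i + j + k - 1 : ℕ) : ℝ) / ((j + k - 1 : ℕ) : ℝ)) =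
      (((i + j - 1 + m).factorial : ℝ) * ((j - 1).factorial : ℝ)) /
        (((i + j - 1).factorial : ℝ) * ((j - 1 + m).factorial : ℝ)) := by
    intro j hj
    have hj1 : 1 ≤ j := (Finset.mem_Icc.mp hj).1
    rw [Finset.prod_div_distrib]
    rw [show Finset.Icc 1 m = Finset.Ico 1 (m+1) from (Finset.Ico_add_one_right_eq_Icc 1 m).symm]
    rw [Finset.prod_Ico_eq_prod_range, Finset.prod_Ico_eq_prod_range]
    have e1 : ∀ k : ℕ, ((i + j + (1 + k) - 1 : ℕ) : ℝ) = (((i + j - 1) + k + 1 : ℕ) : ℝ) := by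
      intro k; congr 1; omega
    have e2 : ∀ k : ℕ, ((j + (1 + k) - 1 : ℕ) : ℝ) = (((j - 1) + k + 1 : ℕ) : ℝ) := by
      intro k; congr 1; omega
    rw [Finset.prod_congr rfl fun k _ => e1 k, Finset.prod_congr rfl fun k _ => e2 k]
    simp only [Nat.add_sub_cancel]
    rw [fact_consec (i + j - 1) m, fact_consec (j - 1) m]
    have hQ : (∏ x ∈ Finset.range m, (((j - 1) + x + 1 : ℕ) : ℝ)) ≠ 0 :=
      ne_of_gt (Finset.prod_pos fun k _ => by exact_mod_cast Nat.succ_pos _)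
    have h1 : ((i + j - 1).factorial : ℝ) ≠ 0 := by positivity
    have h2 : ((j - 1).factorial : ℝ) ≠ 0 := by positivity
    rw [div_eq_div_iff hQ (mul_ne_zero h1 (mul_ne_zero h2 hQ))]
    ring
  rw [Finset.prod_congr rfl step1]
  have prod_fact : ∀ x : ℕ, (∏ t ∈ Finset.range a, ((x + t).factorial : ℝ)) = sf (x + a) / sf x := by
    intro x
    rw [sf_prod x a, mul_comm, mul_div_assoc, div_self (sf_pos x).ne', mul_one]
  rw [show Finset.Icc 1 a = Finset.Ico 1 (a+1) from (Finset.Ico_add_one_right_eq_Icc 1 a).symm,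
    Finset.prod_Ico_eq_prod_range]
  simp only [Nat.add_sub_cancel]
  have e3 : ∀ t : ℕ,
      ((((i + (1 + t) - 1 + m).factorial : ℕ) : ℝ) * (((1 + t) - 1).factorial : ℝ)) /
        ((((i + (1 + t) - 1).factorial : ℕ) : ℝ) * (((1 + t) - 1 + m).factorial : ℝ)) =
      ((((i + m) + t).factorial : ℕ) : ℝ) * (((0 + t).factorial : ℕ) : ℝ) /
        (((((i) + t).factorial : ℕ) : ℝ) * ((((m) + t).factorial : ℕ) : ℝ)) := by
    intro t
    have a1 : i + (1 + t) - 1 + m = i + m + t := by omega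
    have a2 : 1 + t - 1 = 0 + t := by omega
    have a3 : i + (1 + t) - 1 = i + t := by omega
    have a4 : 1 + t - 1 + m = m + t := by omega
    rw [a1, a3, a4, a2]
  rw [Finset.prod_congr rfl fun t _ => e3 t]
  rw [Finset.prod_div_distrib, Finset.prod_mul_distrib, Finset.prod_mul_distrib,
    prod_fact, prod_fact, prod_fact, prod_fact]
  rw [zero_add]
  have h0 := (sf_pos 0).ne'
  have h1 := (sf_pos (i + m)).ne'
  have h2 := (sf_pos i).ne'
  have h3 := (sf_pos m).ne'
  have h4 := (sf_pos (i + a)).ne'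
  have h5 := (sf_pos (m + a)).ne'
  field_simp
  rw [sf_zero]
  ring

lemma sf_one : sf 1 = 1 := by simp [sf]

lemma sf_two : sf 2 = 1 := by simp [sf, Finset.prod_range_succ]

lemma sf2 (x : ℕ) : sf (x + 2) = sf x * (x.factorial : ℝ) * ((x+1).factorial : ℝ) := by
  rw [show x + 2 = x + 1 + 1 from rfl, sf_succ, sf_succ]

lemma sf3 (x : ℕ) : sf (x + 3) = sf x * (x.factorial : ℝ) * ((x+1).factorial : ℝ) * ((x+2).factorial : ℝ) := by
  rw [show x + 3 = x + 2 + 1 from rfl, sf_succ, sf2]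

lemma fc1 (x : ℕ) : (((x+1).factorial : ℕ) : ℝ) = ((x+1 : ℕ) : ℝ) * (x.factorial : ℝ) := by
  rw [Nat.factorial_succ]; push_cast; ring

lemma fc2 (x : ℕ) : (((x+2).factorial : ℕ) : ℝ) = ((x+2 : ℕ) : ℝ) * ((x+1 : ℕ) : ℝ) * (x.factorial : ℝ) := by
  rw [show x + 2 = x + 1 + 1 from rfl]; push_cast [Nat.factorial_succ]; ring

set_option maxHeartbeats 2000000 in
/-- In the completely random case `w_1 = ⋯ = w_{n+1} = 1`, the column density
`s_{((i-1)^{a-1})} s_{(i^{a+1})}/(s_{(i^a)} s_{((i-1)^a)} s_{(1)})` equals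
`a(n+1-a)/((n+1)(i+a-1)(i+a))`. -/
theorem eta_random_case (n a i : ℕ) (ha1 : 1 ≤ a) (han : a ≤ n) (hi : 1 ≤ i) :
    dimRect n (a - 1) (i - 1) * dimRect n (a + 1) i /
      (dimRect n a i * dimRect n a (i - 1) * dimRect n 1 1) =
    ((a * (n + 1 - a) : ℕ) : ℝ) /
      (((n + 1 : ℕ) : ℝ) * ((i + a - 1 : ℕ) : ℝ) * ((i + a : ℕ) : ℝ)) := by
  obtain ⟨b, rfl⟩ : ∃ b, a = b + 1 := ⟨a - 1, by omega⟩
  obtain ⟨j, rfl⟩ : ∃ j, i = j + 1 := ⟨i - 1, by omega⟩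
  obtain ⟨c, rfl⟩ : ∃ c, n = b + 1 + c := ⟨n - (b + 1), by omega⟩
  rw [dim_eq (b+1+c) (b+1-1) (j+1-1) (c+2) (by omega),
      dim_eq (b+1+c) (b+1+1) (j+1) c (by omega),
      dim_eq (b+1+c) (b+1) (j+1) (c+1) (by omega),
      dim_eq (b+1+c) (b+1) (j+1-1) (c+1) (by omega),
      dim_eq (b+1+c) 1 1 (b+c+1) (by omega)]
  have r1 : b+1+c+1 - (b+1) = c+1 := by omega
  have r2 : j+1+(b+1)-1 = j+b+1 := by omega
  rw [r1, r2]
  simp only [Nat.add_sub_cancel]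
  simp only [show j+(c+2)+b = j+b+c+2 from by omega,
    show c+2+b = b+c+2 from by omega,
    show j+1+c+(b+1+1) = j+b+c+3 from by omega,
    show b+1+1 = b+2 from by omega,
    show j+1+c = j+c+1 from by omega,
    show j+1+(b+1+1) = j+b+3 from by omega,
    show c+(b+1+1) = b+c+2 from by omega,
    show j+1+(c+1)+(b+1) = j+b+c+3 from by omega,
    show j+1+(c+1) = j+c+2 from by omega,
    show j+1+(b+1) = j+b+2 from by omega,
    show c+1+(b+1) = b+c+2 from by omega,
    show j+(c+1)+(b+1) = j+b+c+2 from by omega,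
    show j+(c+1) = j+c+1 from by omega,
    show j+(b+1) = j+b+1 from by omega,
    show 1+(b+c+1)+1 = b+c+3 from by omega,
    show 1+(b+c+1) = b+c+2 from by omega,
    show b+c+1+1 = b+c+2 from by omega,
    show j+(c+2) = j+c+2 from by omega,
    show b+1+c+1 = b+c+2 from by omega,
    show (1:ℕ)+1 = 2 from rfl]
  simp only [show j+c+2+b = j+b+c+2 from by omega,
    show j+c+1+(b+2) = j+b+c+3 from by omega,
    show j+c+2+(b+1) = j+b+c+3 from by omega,
    show j+c+1+(b+1) = j+b+c+2 from by omega]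
  simp only [sf3, sf2, sf_succ, sf_one, sf_two, sf_zero, Nat.factorial_zero, fc2, fc1]
  push_cast
  have hb := (sf_pos b).ne'
  have hc := (sf_pos c).ne'
  have hj := (sf_pos j).ne'
  have hjb := (sf_pos (j+b)).ne'
  have hjc := (sf_pos (j+c)).ne'
  have hbc := (sf_pos (b+c)).ne'
  have hjbc := (sf_pos (j+b+c)).ne'
  have f1 : (b.factorial : ℝ) ≠ 0 := by positivity
  have f2 : (c.factorial : ℝ) ≠ 0 := by positivity
  have f3 : (j.factorial : ℝ) ≠ 0 := by positivity
  have f4 : ((j+b).factorial : ℝ) ≠ 0 := by positivity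
  have f5 : ((j+c).factorial : ℝ) ≠ 0 := by positivity
  have f6 : ((b+c).factorial : ℝ) ≠ 0 := by positivity
  have f7 : ((j+b+c).factorial : ℝ) ≠ 0 := by positivity
  have g1 : (j:ℝ)+b+1 ≠ 0 := by positivity
  have g2 : (j:ℝ)+b+2 ≠ 0 := by positivity
  have g3 : (j:ℝ)+c+1 ≠ 0 := by positivity
  have g4 : (b:ℝ)+c+1 ≠ 0 := by positivity
  have g5 : (b:ℝ)+c+2 ≠ 0 := by positivity
  have g6 : (j:ℝ)+b+c+1 ≠ 0 := by positivity
  have g7 : (j:ℝ)+b+c+2 ≠ 0 := by positivity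
  field_simp
end
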